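/- Let A = {a_1,...,a_{3m}} with B/4 < a_i < B/2 for all i and Σ a_i = mB. Construct a tree T as the union of 3m paths P_1,...,P_{3m} from a common vertex u with l(P_i) = a_i, and m paths Q_1,...,Q_m from u each of length L = 2Σ a_i. If A admits a 3-partition into m triples each summing to B, then T has a covering strategy with m robots all starting at u of time at most L + 2B. -/

import Mathlib

open Finset

variable {V : Type*}

/-- The list of consecutive steps of a walk given as a list of vertices. -/
def wsteps (W : List V) : List (V × V) := W.zip W.tail

/-- A walk on a graph: a nonempty list of vertices in which consecutive
entries are equal or adjacent. -/
def IsWalk (G : SimpleGraph V) (W : List V) : Prop :=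
  W ≠ [] ∧ ∀ p ∈ wsteps W, p.1 = p.2 ∨ G.Adj p.1 p.2

/-- The length of a walk: the number of position-changing moves. -/
def wlen [DecidableEq V] (W : List V) : ℕ :=
  (wsteps W).countP (fun p => decide (p.1 ≠ p.2))

/-- The number of times a walk traverses the edge `{x, y}` (in either direction). -/
def trav [DecidableEq V] (W : List V) (x y : V) : ℕ :=
  (wsteps W).countP (fun p => decide ((p.1 = x ∧ p.2 = y) ∨ (p.1 = y ∧ p.2 = x)))

/-- The number of times a walk traverses the edge `(x, y)` from `x` to `y`. -/
def dirTrav [DecidableEq V] (W : List V) (x y : V) : ℕ :=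
  (wsteps W).countP (fun p => decide (p.1 = x ∧ p.2 = y))

/-- A tuple of walks covers the graph: every vertex appears in some walk. -/
def Covers {k : ℕ} (S : Fin k → List V) : Prop := ∀ v : V, ∃ i, v ∈ S i

/-- The total length of a strategy: the sum of the lengths of the walks. -/
def slen [DecidableEq V] {k : ℕ} (S : Fin k → List V) : ℕ := ∑ i, wlen (S i)

/-- A minimum-length covering strategy: a tuple of walks covering all vertices whose
total length is no larger than that of any covering strategy with the same starts. -/
def IsMinCover [DecidableEq V] (G : SimpleGraph V) {k : ℕ} (S : Fin k → List V) : Prop :=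
  (∀ i, IsWalk G (S i)) ∧ Covers S ∧
    ∀ S' : Fin k → List V, (∀ i, IsWalk G (S' i)) → Covers S' →
      (∀ i, (S' i).head? = (S i).head?) → slen S ≤ slen S'

/-- A 3-partition of the multiset a into m triples each summing to B. -/
def ThreePartition (m B : ℕ) (a : Fin (3 * m) → ℕ) : Prop :=
  ∃ f : Fin (3 * m) → Fin m,
    (∀ j : Fin m, (Finset.univ.filter (fun i => f i = j)).card = 3) ∧
    (∀ j : Fin m, ∑ i ∈ Finset.univ.filter (fun i => f i = j), a i = B)

section Aux

lemma steps_of_chain' {R : V → V → Prop} :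
    ∀ (W : List V), W.Chain' R → ∀ p ∈ W.zip W.tail, R p.1 p.2
  | [], _, p, hp => by simp at hp
  | [a], _, p, hp => by simp at hp
  | a :: b :: l, h, p, hp => by
    replace h := List.isChain_cons_cons.mp h
    rcases List.mem_cons.mp hp with hp | hp
    · subst hp; exact h.1
    · exact steps_of_chain' (b :: l) h.2 p hp

lemma getLast?_tail_of_ne {l : List V} (h : l.tail ≠ []) :
    l.tail.getLast? = l.getLast? := by
  cases l with
  | nil => simp at h
  | cons a t =>
    cases t with
    | nil => simp at h
    | cons b t' => simp [List.getLast?_cons_cons]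

lemma tail_append_ne {l l' : List V} (h : l ≠ []) :
    (l ++ l').tail = l.tail ++ l' := by
  cases l with
  | nil => simp at h
  | cons a t => simp

lemma glue_chain {R : V → V → Prop} (u : V) :
    ∀ (ls : List (List V)), (∀ s ∈ ls, List.Chain' R (u :: s) ∧ s.getLast? = some u) →
    ∀ (q : List V), List.Chain' R (u :: q) →
    List.Chain' R (u :: (ls.flatMap id ++ q))
  | [], _, q, hq => by simpa using hq
  | s :: ls, h, q, hq => by
    have hs := h s List.mem_cons_self
    have ih := glue_chain u ls (fun t ht => h t (List.mem_cons_of_mem _ ht)) q hq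
    have he : (u :: s) ++ (ls.flatMap id ++ q) = u :: ((s :: ls).flatMap id ++ q) := by
      simp
    rw [← he]; apply List.isChain_append.mpr
    refine ⟨hs.1, (List.isChain_cons.mp ih).2, ?_⟩
    intro x hx y hy
    have hx' : x = u := by
      have hgl : (u :: s).getLast? = some u := by
        cases s with
        | nil => rfl
        | cons c t => rw [List.getLast?_cons_cons]; exact hs.2
      rw [hgl] at hx; exact (Option.some_inj.mp hx).symm
    subst hx'
    exact (List.isChain_cons.mp ih).1 y hy

end Aux

/-- MTCP reduction, forward direction: if A admits a 3-partition, the star of the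
3m paths Pᵢ (of lengths aᵢ) and the m paths Qⱼ (of length L = 2Σaᵢ = 2mB) has a
covering strategy with m robots starting at u of time at most L + 2B. -/
theorem stmt12 {V : Type*} [Fintype V] [DecidableEq V] (G : SimpleGraph V) (hT : G.IsTree)
    (m B : ℕ) (hm : 1 ≤ m) (a : Fin (3 * m) → ℕ)
    (ha : ∀ i, B < 4 * a i ∧ 2 * a i < B) (hsum : ∑ i, a i = m * B)
    (u : V) (P : Fin (3 * m) → List V) (Q : Fin m → List V)
    (hPpath : ∀ i, (P i).Nodup ∧ (P i).Chain' G.Adj ∧ (P i).head? = some u ∧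
      (P i).length = a i + 1)
    (hQpath : ∀ j, (Q j).Nodup ∧ (Q j).Chain' G.Adj ∧ (Q j).head? = some u ∧
      (Q j).length = 2 * m * B + 1)
    (hPP : ∀ i j, i ≠ j → ∀ x, x ∈ P i → x ∈ P j → x = u)
    (hPQ : ∀ i j, ∀ x, x ∈ P i → x ∈ Q j → x = u)
    (hQQ : ∀ i j, i ≠ j → ∀ x, x ∈ Q i → x ∈ Q j → x = u)
    (hcov : ∀ x : V, (∃ i, x ∈ P i) ∨ (∃ j, x ∈ Q j))
    (hpart : ThreePartition m B a) :
    ∃ S : Fin m → List V, (∀ i, IsWalk G (S i)) ∧ Covers S ∧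
      (∀ i, (S i).head? = some u) ∧
      (∀ i, (S i).length - 1 ≤ 2 * m * B + 2 * B) := by
  classical
  obtain ⟨f, hf3, hfsum⟩ := hpart
  set R : V → V → Prop := fun x y => x = y ∨ G.Adj x y with hR
  have haipos : ∀ i, 1 ≤ a i := fun i => by have := ha i; omega
  have hPne : ∀ i, P i ≠ [] := fun i => by
    have h := (hPpath i).2.2.2; intro hn; rw [hn] at h; simp at h
  have hPcons : ∀ i, P i = u :: (P i).tail := fun i =>
    List.eq_cons_of_mem_head? (by rw [(hPpath i).2.2.1]; rfl)
  have hQcons : ∀ j, Q j = u :: (Q j).tail := fun j =>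
    List.eq_cons_of_mem_head? (by rw [(hQpath j).2.2.1]; rfl)
  set loop : Fin (3 * m) → List V := fun i => P i ++ (P i).reverse.tail with hloop
  have hlooptail : ∀ i, (loop i).tail = (P i).tail ++ (P i).reverse.tail := fun i => by
    simp only [hloop]
    exact tail_append_ne (hPne i)
  have hloopcons : ∀ i, loop i = u :: (loop i).tail := fun i => by
    apply List.eq_cons_of_mem_head?
    simp only [hloop]
    rw [List.head?_append_of_ne_nil _ (hPne i), (hPpath i).2.2.1]
    rfl
  have hchainP : ∀ i, (P i).Chain' R := fun i =>
    ((hPpath i).2.1).imp (fun _ _ h => Or.inr h)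
  have hchainrev : ∀ i, (P i).reverse.Chain' R := fun i => by
    apply List.isChain_reverse.mpr
    exact ((hPpath i).2.1).imp (fun _ _ h => Or.inr h.symm)
  have hchainloop : ∀ i, (loop i).Chain' R := fun i => by
    simp only [hloop]; apply List.isChain_append.mpr
    refine ⟨hchainP i, (hchainrev i).tail, ?_⟩
    intro x hx y hy
    have hrx : (P i).reverse = x :: (P i).reverse.tail := by
      apply List.eq_cons_of_mem_head?
      rw [List.head?_reverse]
      exact hx
    have h2 := List.isChain_cons.mp (hrx ▸ hchainrev i)
    exact h2.1 y hy
  have hrevtail_ne : ∀ i, (P i).reverse.tail ≠ [] := fun i => by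
    apply List.ne_nil_of_length_pos
    rw [List.length_tail, List.length_reverse, (hPpath i).2.2.2]
    have := haipos i; omega
  have hlastrev : ∀ i, (P i).reverse.tail.getLast? = some u := fun i => by
    rw [getLast?_tail_of_ne (hrevtail_ne i), List.getLast?_reverse]
    exact (hPpath i).2.2.1
  have hlast : ∀ i, (loop i).tail.getLast? = some u := fun i => by
    rw [hlooptail, List.getLast?_append, hlastrev i]; rfl
  have hchainloop' : ∀ i, List.Chain' R (u :: (loop i).tail) := fun i => by
    rw [← hloopcons i]; exact hchainloop i
  have hchainQ : ∀ j, List.Chain' R (u :: (Q j).tail) := fun j => by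
    rw [← hQcons j]; exact ((hQpath j).2.1).imp (fun _ _ h => Or.inr h)
  have hlooptlen : ∀ i, (loop i).tail.length = 2 * a i := fun i => by
    rw [hlooptail, List.length_append, List.length_tail, List.length_tail,
      List.length_reverse, (hPpath i).2.2.2]
    have := haipos i; omega
  set seg : Fin m → List V := fun j =>
    (((Finset.univ.filter (fun i => f i = j)).toList.map (fun i => (loop i).tail)).flatMap id)
    with hseg
  refine ⟨fun j => u :: (seg j ++ (Q j).tail), ?_, ?_, ?_, ?_⟩
  · intro j
    constructor
    · simp
    · have hch : List.Chain' R (u :: (seg j ++ (Q j).tail)) := by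
        simp only [hseg]
        apply glue_chain u
        · intro s hs
          obtain ⟨i, _, rfl⟩ := List.mem_map.mp hs
          exact ⟨hchainloop' i, hlast i⟩
        · exact hchainQ j
      intro p hp
      exact steps_of_chain' _ hch p hp
  · intro v
    rcases hcov v with ⟨i, hi⟩ | ⟨j, hj⟩
    · by_cases hv : v = u
      · exact ⟨f i, by rw [hv]; exact List.mem_cons_self⟩
      · refine ⟨f i, ?_⟩
        have hvloop : v ∈ loop i := by simp only [hloop]; exact List.mem_append_left _ hi
        rw [hloopcons i] at hvloop
        rcases List.mem_cons.mp hvloop with rfl | hvt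
        · exact absurd rfl hv
        · apply List.mem_cons_of_mem
          apply List.mem_append_left
          simp only [hseg]
          apply List.mem_flatMap.mpr
          refine ⟨(loop i).tail, ?_, hvt⟩
          exact List.mem_map.mpr ⟨i, by
            rw [Finset.mem_toList, Finset.mem_filter]
            exact ⟨Finset.mem_univ i, rfl⟩, rfl⟩
    · refine ⟨j, ?_⟩
      rw [hQcons j] at hj
      rcases List.mem_cons.mp hj with rfl | hjt
      · exact List.mem_cons_self
      · exact List.mem_cons_of_mem _ (List.mem_append_right _ hjt)
  · intro j; rfl
  · intro j
    have hseglen : (seg j).length = 2 * B := by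
      rw [hseg, List.length_flatMap]
      have he : ((Finset.univ.filter (fun i => f i = j)).toList.map
          (fun i => (loop i).tail)).map (fun a => (id a).length)
          = (Finset.univ.filter (fun i => f i = j)).toList.map (fun i => 2 * a i) := by
        rw [List.map_map]
        exact List.map_congr_left (fun i _ => hlooptlen i)
      rw [he, Finset.sum_map_toList, ← Finset.mul_sum, hfsum j]
    have hQtlen : (Q j).tail.length = 2 * m * B := by
      rw [List.length_tail, (hQpath j).2.2.2]; omega
    simp only [List.length_cons, List.length_append, hseglen, hQtlen]
    omega
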